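/- If P is a finite twin-free, rank-connected, planar lattice, then D(P) ≤ 2. -/

import Mathlib

set_option linter.unusedSectionVars false
set_option linter.unusedVariables false

/-- A coloring `c` of a poset is distinguishing if the only color-preserving
order-automorphism is the identity. -/
def IsDistinguishing {α : Type*} [PartialOrder α] {C : Type*} (c : α → C) : Prop :=
  ∀ φ : α ≃o α, (∀ x, c (φ x) = c x) → ∀ x, φ x = x

/-- The distinguishing number of a poset. -/
noncomputable def distNum (α : Type*) [PartialOrder α] : ℕ :=
  sInf {k | ∃ c : α → Fin k, IsDistinguishing c}

/-- Two incomparable points are twins if they relate in the same way to every point. -/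
def AreTwins {P : Type*} [PartialOrder P] (x y : P) : Prop :=
  x ≠ y ∧ ¬ x ≤ y ∧ ¬ y ≤ x ∧ (∀ z : P, z < x ↔ z < y) ∧ (∀ z : P, x < z ↔ y < z)


section Aux

variable {P : Type*} [Lattice P] [Fintype P] [BoundedOrder P]
variable {rk : P → ℕ} {f g : P → ℕ}

theorem aux_rk_mono (hrkcov : ∀ a b : P, a ⋖ b → rk b = rk a + 1) :
    ∀ {a b : P}, a ≤ b → rk a ≤ rk b := by
  suffices h : ∀ n : ℕ, ∀ b a : P, rk b ≤ n → a ≤ b → rk a ≤ rk b by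
    intro a b hab; exact h (rk b) b a le_rfl hab
  intro n
  induction n with
  | zero =>
    intro b a hb hab
    rcases hab.lt_or_eq with h | h
    · obtain ⟨w, _, hwb⟩ := exists_le_covBy_of_lt h
      have := hrkcov _ _ hwb
      omega
    · rw [h]
  | succ n ih =>
    intro b a hb hab
    rcases hab.lt_or_eq with h | h
    · obtain ⟨w, haw, hwb⟩ := exists_le_covBy_of_lt h
      have h1 := hrkcov _ _ hwb
      have h2 := ih w a (by omega) haw
      omega
    · rw [h]

theorem aux_rk_lt (hrkcov : ∀ a b : P, a ⋖ b → rk b = rk a + 1) {a b : P} (h : a < b) :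
    rk a < rk b := by
  obtain ⟨w, haw, hwb⟩ := exists_le_covBy_of_lt h
  have h1 := hrkcov _ _ hwb
  have h2 := aux_rk_mono hrkcov haw
  omega

theorem aux_not_le (hrkcov : ∀ a b : P, a ⋖ b → rk b = rk a + 1) {a b : P}
    (hr : rk a = rk b) (hne : a ≠ b) : ¬ a ≤ b := by
  intro h
  have := aux_rk_lt hrkcov (h.lt_of_ne hne)
  omega

theorem aux_cov_of_lt (hrkcov : ∀ a b : P, a ⋖ b → rk b = rk a + 1) {a b : P}
    (h : a < b) (hr : rk b = rk a + 1) : a ⋖ b := by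
  refine ⟨h, fun c h1 h2 => ?_⟩
  have := aux_rk_lt hrkcov h1
  have := aux_rk_lt hrkcov h2
  omega

theorem aux_f_inj (hfg : ∀ x y : P, x ≤ y ↔ (f x ≤ f y ∧ g x ≤ g y))
    (hrkcov : ∀ a b : P, a ⋖ b → rk b = rk a + 1) {a b : P}
    (hr : rk a = rk b) (hf : f a = f b) : a = b := by
  by_contra hne
  have h1 : ¬ a ≤ b := aux_not_le hrkcov hr hne
  have h2 : ¬ b ≤ a := aux_not_le hrkcov hr.symm (Ne.symm hne)
  rcases le_total (g a) (g b) with h | h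
  · exact h1 ((hfg a b).2 ⟨hf.le, h⟩)
  · exact h2 ((hfg b a).2 ⟨hf.ge, h⟩)

theorem aux_g_lt (hfg : ∀ x y : P, x ≤ y ↔ (f x ≤ f y ∧ g x ≤ g y))
    (hrkcov : ∀ a b : P, a ⋖ b → rk b = rk a + 1) {a b : P}
    (hr : rk a = rk b) (hf : f a < f b) : g b < g a := by
  have hne : a ≠ b := fun e => by rw [e] at hf; exact lt_irrefl _ hf
  have h1 : ¬ a ≤ b := aux_not_le hrkcov hr hne
  by_contra h
  push_neg at h
  exact h1 ((hfg a b).2 ⟨hf.le, h⟩)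

/-- "between" lemma: if `a,b,c` are on the same level with `f a ≤ f b ≤ f c` and
`u` is above `a` and `c`, then `u` is above `b`. -/
theorem aux_btw (hfg : ∀ x y : P, x ≤ y ↔ (f x ≤ f y ∧ g x ≤ g y))
    (hrkcov : ∀ a b : P, a ⋖ b → rk b = rk a + 1) {a b c u : P}
    (hab : rk a = rk b) (hbc : rk b = rk c) (hfab : f a ≤ f b) (hfbc : f b ≤ f c)
    (hau : a ≤ u) (hcu : c ≤ u) : b ≤ u := by
  rcases hfab.lt_or_eq with h1 | h1
  · rcases hfbc.lt_or_eq with h2 | h2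
    · have hgb : g b < g a := aux_g_lt hfg hrkcov hab h1
      refine (hfg b u).2 ⟨?_, ?_⟩
      · have := ((hfg c u).1 hcu).1; omega
      · have := ((hfg a u).1 hau).2; omega
    · rw [aux_f_inj hfg hrkcov hbc h2]; exact hcu
  · rw [← aux_f_inj hfg hrkcov hab h1]; exact hau

/-- two distinct elements on the same level have at most one common upper cover. -/
theorem aux_ucc (hrkcov : ∀ a b : P, a ⋖ b → rk b = rk a + 1) {a b u v : P}
    (hr : rk a = rk b) (hne : a ≠ b)
    (hau : a ⋖ u) (hbu : b ⋖ u) (hav : a ⋖ v) (hbv : b ⋖ v) : u = v := by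
  have h1 : a < a ⊔ b := by
    refine lt_of_le_of_ne le_sup_left (fun h => ?_)
    exact aux_not_le hrkcov hr.symm (Ne.symm hne) (h ▸ le_sup_right)
  have key : ∀ w, a ⋖ w → b ≤ w → a ⊔ b = w := by
    intro w hw hbw
    rcases (sup_le hw.le hbw).lt_or_eq with h | h
    · exact absurd h (hw.2 h1)
    · exact h
  rw [← key u hau hbu.le, ← key v hav hbv.le]

/-- two distinct elements on the same level have at most one common lower cover. -/
theorem aux_ucl (hrkcov : ∀ a b : P, a ⋖ b → rk b = rk a + 1) {a b u v : P}
    (hr : rk a = rk b) (hne : a ≠ b)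
    (hau : u ⋖ a) (hbu : u ⋖ b) (hav : v ⋖ a) (hbv : v ⋖ b) : u = v := by
  have h1 : a ⊓ b < a := by
    refine lt_of_le_of_ne inf_le_left (fun h => ?_)
    exact aux_not_le hrkcov hr hne (h ▸ inf_le_right)
  have key : ∀ w, w ⋖ a → w ≤ b → w = a ⊓ b := by
    intro w hw hbw
    rcases (le_inf hw.le hbw).lt_or_eq with h | h
    · exact absurd h1 (hw.2 h)
    · exact h
  rw [key u hau hbu.le, key v hav hbv.le]

/-- crossing lemma. -/
theorem aux_cross (hfg : ∀ x y : P, x ≤ y ↔ (f x ≤ f y ∧ g x ≤ g y))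
    (hrkcov : ∀ a b : P, a ⋖ b → rk b = rk a + 1) {a a' b b' : P}
    (ha : rk a = rk a') (hfa : f a < f a')
    (hb : rk b = rk b') (hfb : f b < f b')
    (h1 : a ≤ b') (h2 : a' ≤ b) : a ≤ b ∧ a' ≤ b' := by
  have hga : g a' < g a := aux_g_lt hfg hrkcov ha hfa
  have hgb : g b' < g b := aux_g_lt hfg hrkcov hb hfb
  obtain ⟨hf1, hg1⟩ := (hfg a b').1 h1
  obtain ⟨hf2, hg2⟩ := (hfg a' b).1 h2
  exact ⟨(hfg a b).2 ⟨by omega, by omega⟩, (hfg a' b').2 ⟨by omega, by omega⟩⟩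

/-- fan lemma: if `cm ⊏ x ⊏ x'` on a level are all covered by `u`,
then `u` is the unique upper cover of `x`. -/
theorem aux_fan (hfg : ∀ x y : P, x ≤ y ↔ (f x ≤ f y ∧ g x ≤ g y))
    (hrkcov : ∀ a b : P, a ⋖ b → rk b = rk a + 1) {cm x x' u y : P}
    (hr1 : rk cm = rk x) (hr2 : rk x = rk x') (hf1 : f cm < f x) (hf2 : f x < f x')
    (h1 : cm ⋖ u) (h2 : x ⋖ u) (h3 : x' ⋖ u) (hy : x ⋖ y) : y = u := by
  have hru : rk u = rk x + 1 := hrkcov _ _ h2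
  have hry : rk y = rk x + 1 := hrkcov _ _ hy
  have hryu : rk y = rk u := by omega
  have hnecx : cm ≠ x := fun e => by rw [e] at hf1; exact lt_irrefl _ hf1
  have hnexx' : x ≠ x' := fun e => by rw [e] at hf2; exact lt_irrefl _ hf2
  by_contra hne
  rcases lt_trichotomy (f y) (f u) with h | h | h
  · obtain ⟨hcy, -⟩ := aux_cross hfg hrkcov hr1 hf1 hryu h h1.le hy.le
    have hcov : cm ⋖ y := aux_cov_of_lt hrkcov
      (hcy.lt_of_ne (fun e => by rw [← e] at hry; omega)) (by omega)
    exact hne (aux_ucc hrkcov hr1 hnecx hcov hy h1 h2)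
  · exact hne (aux_f_inj hfg hrkcov hryu h)
  · obtain ⟨-, hx'y⟩ := aux_cross hfg hrkcov hr2 hf2 hryu.symm h hy.le h3.le
    have hcov : x' ⋖ y := aux_cov_of_lt hrkcov
      (hx'y.lt_of_ne (fun e => by rw [← e] at hry; omega)) (by omega)
    exact hne (aux_ucc hrkcov hr2 hnexx' h2 h3 hy hcov).symm

end Aux

section Aux2

variable {P : Type*} [Lattice P] [Fintype P] [BoundedOrder P]
variable {rk : P → ℕ} {f g : P → ℕ}

theorem aux_rk_iso (hrk0 : rk ⊥ = 0) (hrkcov : ∀ a b : P, a ⋖ b → rk b = rk a + 1)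
    (φ : P ≃o P) : ∀ x : P, rk (φ x) = rk x := by
  suffices h : ∀ n : ℕ, ∀ x : P, rk x ≤ n → rk (φ x) = rk x by
    intro x; exact h (rk x) x le_rfl
  intro n
  induction n with
  | zero =>
    intro x hx
    have hb : x = ⊥ := by
      by_contra hxb
      obtain ⟨w, _, hwx⟩ := exists_le_covBy_of_lt (bot_lt_iff_ne_bot.2 hxb)
      have := hrkcov _ _ hwx
      omega
    rw [hb, map_bot]
  | succ n ih =>
    intro x hx
    by_cases hxb : x = ⊥
    · rw [hxb, map_bot]
    · obtain ⟨w, _, hwx⟩ := exists_le_covBy_of_lt (bot_lt_iff_ne_bot.2 hxb)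
      have h1 : rk x = rk w + 1 := hrkcov _ _ hwx
      have h2 := ih w (by omega)
      have h3 : φ w ⋖ φ x := (apply_covBy_apply_iff φ).2 hwx
      rw [hrkcov _ _ h3, h2, ← h1]

theorem aux_cons (hfg : ∀ x y : P, x ≤ y ↔ (f x ≤ f y ∧ g x ≤ g y))
    (hrkcov : ∀ a b : P, a ⋖ b → rk b = rk a + 1) {i : ℕ}
    (hc : (SimpleGraph.fromRel fun a b : {z : P // rk z = i ∨ rk z = i + 1} =>
        (a : P) ⋖ (b : P)).Preconnected)
    {a b : P} (ha : rk a = i) (hb : rk b = i) (hfab : f a < f b)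
    (hcons : ∀ z : P, rk z = i → f z ≤ f a ∨ f b ≤ f z) :
    ∃ u, a ⋖ u ∧ b ⋖ u := by
  classical
  set G := (SimpleGraph.fromRel fun a b : {z : P // rk z = i ∨ rk z = i + 1} =>
        (a : P) ⋖ (b : P)) with hG
  set S : P → P → Prop := fun w w' => ∃ u, w ⋖ u ∧ w' ⋖ u with hS
  have hreach : G.Reachable ⟨a, Or.inl ha⟩ ⟨b, Or.inl hb⟩ := hc _ _
  rw [SimpleGraph.reachable_iff_reflTransGen] at hreach
  have key : ∀ v : {z : P // rk z = i ∨ rk z = i + 1},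
      Relation.ReflTransGen G.Adj v ⟨b, Or.inl hb⟩ →
      (rk (v : P) = i → Relation.ReflTransGen S (v : P) b) ∧
      (rk (v : P) = i + 1 → ∀ w : P, w ⋖ (v : P) → Relation.ReflTransGen S w b) := by
    intro v hv
    induction hv using Relation.ReflTransGen.head_induction_on with
    | refl =>
      refine ⟨fun _ => Relation.ReflTransGen.refl, fun h => ?_⟩
      simp only at h
      omega
    | head hadj htail ih =>
      rename_i v c
      rw [hG, SimpleGraph.fromRel_adj] at hadj
      obtain ⟨hne, hcov⟩ := hadj
      constructor
      · intro hvi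
        rcases hcov with h1 | h2
        · have hc1 : rk (c : P) = i + 1 := by rw [hrkcov _ _ h1, hvi]
          exact ih.2 hc1 _ h1
        · have := hrkcov _ _ h2
          rcases c.2 with h | h <;> omega
      · intro hvi1 w hw
        rcases hcov with h1 | h2
        · have := hrkcov _ _ h1
          rcases c.2 with h | h <;> omega
        · have hci : rk (c : P) = i := by have := hrkcov _ _ h2; omega
          exact Relation.ReflTransGen.head ⟨(v : P), hw, h2⟩ (ih.1 hci)
  have hRTG : Relation.ReflTransGen S a b := (key _ hreach).1 ha
  clear hreach key
  have cut : ∀ w : P, Relation.ReflTransGen S w b → rk w = i → f w ≤ f a →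
      ∃ u, a ⋖ u ∧ b ⋖ u := by
    intro w hw
    induction hw using Relation.ReflTransGen.head_induction_on with
    | refl =>
      intro _ hfb
      omega
    | head hstep htail ih =>
      rename_i w w'
      intro hwi hfw
      obtain ⟨u, hwu, hw'u⟩ := hstep
      have hui : rk u = i + 1 := by rw [hrkcov _ _ hwu, hwi]
      have hw'i : rk w' = i := by have := hrkcov _ _ hw'u; omega
      by_cases hcase : f w' ≤ f a
      · exact ih hw'i hcase
      · push_neg at hcase
        have hfbw' : f b ≤ f w' := by
          rcases hcons _ hw'i with h | h
          · omega
          · exact h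
        have hau : a ≤ u := aux_btw hfg hrkcov (by omega : rk w = rk a) (by omega : rk a = rk w')
          hfw (by omega) hwu.le hw'u.le
        have hbu : b ≤ u := aux_btw hfg hrkcov (by omega : rk w = rk b) (by omega : rk b = rk w')
          (by omega) hfbw' hwu.le hw'u.le
        refine ⟨u, ?_, ?_⟩
        · exact aux_cov_of_lt hrkcov (hau.lt_of_ne (fun e => by rw [e] at ha; omega)) (by omega)
        · exact aux_cov_of_lt hrkcov (hbu.lt_of_ne (fun e => by rw [e] at hb; omega)) (by omega)
  exact cut a hRTG ha le_rfl

end Aux2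

/-- Every finite twin-free, rank-connected, planar lattice has
distinguishing number at most 2.  Here `rk` is a rank function (the lattice is ranked),
rank-connectedness says the cover graph between any two consecutive ranks is connected,
and planarity is expressed (for finite lattices, equivalently to upward planarity of the
Hasse diagram) by order dimension at most 2: the order is the intersection of two linear
orders, i.e. it embeds coordinatewise into `ℕ × ℕ`. -/
theorem distNum_le_two_of_planar_rank_connected {P : Type*} [Lattice P] [Fintype P]
    [BoundedOrder P]
    (rk : P → ℕ) (hrk0 : rk ⊥ = 0) (hrkcov : ∀ a b : P, a ⋖ b → rk b = rk a + 1)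
    (hconn : ∀ i : ℕ,
      (SimpleGraph.fromRel fun a b : {z : P // rk z = i ∨ rk z = i + 1} =>
        (a : P) ⋖ (b : P)).Preconnected)
    (hplanar : ∃ f g : P → ℕ, ∀ x y : P, x ≤ y ↔ (f x ≤ f y ∧ g x ≤ g y))
    (htwinfree : ∀ x y : P, ¬ AreTwins x y) :
    distNum P ≤ 2 := by
  classical
  obtain ⟨f, g, hfg⟩ := hplanar
  have hrkiso : ∀ (ψ : P ≃o P), ∀ x : P, rk (ψ x) = rk x := aux_rk_iso hrk0 hrkcov
  apply Nat.sInf_le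
  refine ⟨fun x => if (∀ y, rk y = rk x → f x ≤ f y) then (0 : Fin 2) else 1, ?_⟩
  intro φ hφ
  by_contra hbad
  push_neg at hbad
  obtain ⟨x₀, hx₀⟩ := hbad
  have hBadne : (Finset.univ.filter fun z : P => φ z ≠ z).Nonempty :=
    ⟨x₀, Finset.mem_filter.2 ⟨Finset.mem_univ _, hx₀⟩⟩
  obtain ⟨x₂, hx₂mem, hx₂min⟩ := Finset.exists_min_image _ rk hBadne
  have hx₂Bad : φ x₂ ≠ x₂ := (Finset.mem_filter.1 hx₂mem).2
  set i := rk x₂ with hidef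
  have hmin : ∀ z : P, φ z ≠ z → i ≤ rk z := fun z hz =>
    hx₂min z (Finset.mem_filter.2 ⟨Finset.mem_univ _, hz⟩)
  have hTne : (Finset.univ.filter fun z : P => φ z ≠ z ∧ rk z = i).Nonempty :=
    ⟨x₂, Finset.mem_filter.2 ⟨Finset.mem_univ _, hx₂Bad, rfl⟩⟩
  obtain ⟨x, hxT, hxmin'⟩ := Finset.exists_min_image _ f hTne
  have hxBad : φ x ≠ x := (Finset.mem_filter.1 hxT).2.1
  have hrkx : rk x = i := (Finset.mem_filter.1 hxT).2.2
  have hxmin : ∀ z : P, φ z ≠ z → rk z = i → f x ≤ f z := fun z h1 h2 =>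
    hxmin' z (Finset.mem_filter.2 ⟨Finset.mem_univ _, h1, h2⟩)
  have hfix : ∀ z : P, rk z < i → φ z = z := by
    intro z hz
    by_contra h
    have := hmin z h
    omega
  have hfixs : ∀ z : P, rk z < i → φ.symm z = z := by
    intro z hz
    conv_lhs => rw [← hfix z hz]
    exact φ.symm_apply_apply z
  obtain ⟨x', hx'⟩ : ∃ y : P, y = φ x := ⟨φ x, rfl⟩
  have hrkx' : rk x' = i := by rw [hx', hrkiso φ, hrkx]
  have hnex : x' ≠ x := by rw [hx']; exact hxBad
  have hx'Bad : φ x' ≠ x' := by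
    intro h
    refine hnex (φ.injective ?_)
    rw [h]
    exact hx'
  have hfxx' : f x < f x' := by
    rcases (hxmin x' hx'Bad hrkx').lt_or_eq with h | h
    · exact h
    · exact absurd (aux_f_inj hfg hrkcov (hrkx.trans hrkx'.symm) h) (fun e => hnex e.symm)
  have hine : i ≠ 0 := by
    intro h
    have hxbot : x = ⊥ := by
      by_contra hxb
      obtain ⟨w, _, hwx⟩ := exists_le_covBy_of_lt (bot_lt_iff_ne_bot.2 hxb)
      have := hrkcov _ _ hwx
      omega
    rw [hxbot] at hxBad
    exact hxBad (map_bot φ)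
  obtain ⟨b, hbLi, hbmin'⟩ := Finset.exists_min_image
    (Finset.univ.filter fun z : P => rk z = i) f
    ⟨x, Finset.mem_filter.2 ⟨Finset.mem_univ _, hrkx⟩⟩
  have hrkb : rk b = i := (Finset.mem_filter.1 hbLi).2
  have hbmin : ∀ z : P, rk z = i → f b ≤ f z := fun z hz =>
    hbmin' z (Finset.mem_filter.2 ⟨Finset.mem_univ _, hz⟩)
  have hbpred : ∀ y, rk y = rk b → f b ≤ f y := by
    intro y hy
    exact hbmin y (by rw [hy, hrkb])
  have hφb : φ b = b := by
    have h0 := hφ b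
    simp only at h0
    by_cases hc : ∀ y, rk y = rk (φ b) → f (φ b) ≤ f y
    · have h1 : f (φ b) ≤ f b := hc b (hrkiso φ b).symm
      have h2 : f b ≤ f (φ b) := hbpred (φ b) (hrkiso φ b)
      exact aux_f_inj hfg hrkcov (hrkiso φ b) (le_antisymm h1 h2)
    · rw [if_neg hc, if_pos hbpred] at h0
      exact absurd h0 (by decide)
  have hneb : b ≠ x := fun e => hxBad (e ▸ hφb)
  have hfbx : f b < f x := by
    rcases (hbmin x hrkx).lt_or_eq with h | h
    · exact h
    · exact absurd (aux_f_inj hfg hrkcov (hrkb.trans hrkx.symm) h) hneb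
  obtain ⟨cm, hcmLt, hcmmax'⟩ := Finset.exists_max_image
    (Finset.univ.filter fun z : P => rk z = i ∧ f z < f x) f
    ⟨b, Finset.mem_filter.2 ⟨Finset.mem_univ _, hrkb, hfbx⟩⟩
  have hrkcm : rk cm = i := (Finset.mem_filter.1 hcmLt).2.1
  have hfcmx : f cm < f x := (Finset.mem_filter.1 hcmLt).2.2
  have hcmmax : ∀ z : P, rk z = i → f z < f x → f z ≤ f cm := fun z h1 h2 =>
    hcmmax' z (Finset.mem_filter.2 ⟨Finset.mem_univ _, h1, h2⟩)
  have hφcm : φ cm = cm := by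
    by_contra h
    have := hxmin cm h hrkcm
    omega
  have hcons : ∀ z : P, rk z = i → f z ≤ f cm ∨ f x ≤ f z := by
    intro z hz
    by_cases h : f z < f x
    · exact Or.inl (hcmmax z hz h)
    · exact Or.inr (not_lt.1 h)
  obtain ⟨u, hcmu, hxu⟩ := aux_cons hfg hrkcov (hconn i) hrkcm hrkx hfcmx hcons
  have hxbot : x ≠ ⊥ := by
    intro e
    apply hine
    rw [← hrkx, e, hrk0]
  obtain ⟨m, _, hmx⟩ := exists_le_covBy_of_lt (bot_lt_iff_ne_bot.2 hxbot)
  have hrkm : rk m + 1 = i := by rw [← hrkx]; exact (hrkcov _ _ hmx).symm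
  have hφm : φ m = m := hfix m (by omega)
  have hDsub : ∀ w : P, w ⋖ x → w ⋖ x' := by
    intro w hw
    have hr : rk w < i := by have := hrkcov _ _ hw; omega
    have h1 : φ w ⋖ φ x := (apply_covBy_apply_iff φ).2 hw
    rw [hfix w hr] at h1
    rw [hx']
    exact h1
  have hDsub' : ∀ w : P, w ⋖ x' → w ⋖ x := by
    intro w hw
    have hr : rk w < i := by
      have := hrkcov _ _ hw
      rw [hrkx'] at this
      omega
    have h1 : φ.symm w ⋖ φ.symm x' := (apply_covBy_apply_iff φ.symm).2 hw
    rw [hfixs w hr, hx'] at h1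
    rwa [φ.symm_apply_apply] at h1
  have hmx' : m ⋖ x' := hDsub m hmx
  have hDx : ∀ w : P, w ⋖ x → w = m := by
    intro w hw
    exact aux_ucl hrkcov (hrkx.trans hrkx'.symm) (Ne.symm hnex) hw (hDsub w hw) hmx hmx'
  have hDx' : ∀ w : P, w ⋖ x' → w = m := by
    intro w hw
    exact aux_ucl hrkcov (hrkx.trans hrkx'.symm) (Ne.symm hnex) (hDsub' w hw) hw hmx hmx'
  have hrku : rk u = i + 1 := by rw [hrkcov _ _ hxu, hrkx]
  have hnecmx : cm ≠ x := fun e => by rw [e] at hfcmx; exact lt_irrefl _ hfcmx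
  have h1 : cm ⋖ φ u := by
    have h := (apply_covBy_apply_iff φ).2 hcmu
    rwa [hφcm] at h
  have h2 : x' ⋖ φ u := by
    have h := (apply_covBy_apply_iff φ).2 hxu
    rwa [← hx'] at h
  have hrkφu : rk (φ u) = i + 1 := by rw [hrkiso φ u, hrku]
  have h3 : x ≤ φ u := aux_btw hfg hrkcov (hrkcm.trans hrkx.symm) (hrkx.trans hrkx'.symm)
      hfcmx.le hfxx'.le h1.le h2.le
  have h4 : x ⋖ φ u := aux_cov_of_lt hrkcov
      (h3.lt_of_ne (fun e => by rw [← e] at hrkφu; omega)) (by omega)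
  have hφu : φ u = u := aux_ucc hrkcov (hrkcm.trans hrkx.symm) hnecmx h1 h4 hcmu hxu
  have hx'u : x' ⋖ u := by rw [← hφu]; exact h2
  have hUx : ∀ y : P, x ⋖ y → y = u := by
    intro y hy
    exact aux_fan hfg hrkcov (hrkcm.trans hrkx.symm) (hrkx.trans hrkx'.symm) hfcmx hfxx'
      hcmu hxu hx'u hy
  have hUx' : ∀ y : P, x' ⋖ y → y = u := by
    intro y hy
    have h5 : φ.symm x' ⋖ φ.symm y := (apply_covBy_apply_iff φ.symm).2 hy
    rw [hx', φ.symm_apply_apply] at h5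
    have h6 := hUx _ h5
    have h7 : y = φ u := by rw [← h6, φ.apply_symm_apply]
    rw [h7, hφu]
  refine htwinfree x x' ⟨Ne.symm hnex, aux_not_le hrkcov (hrkx.trans hrkx'.symm) (Ne.symm hnex),
    aux_not_le hrkcov (hrkx'.trans hrkx.symm) hnex, fun z => ⟨?_, ?_⟩, fun z => ⟨?_, ?_⟩⟩
  · intro hz
    obtain ⟨w, hzw, hwx⟩ := exists_le_covBy_of_lt hz
    rw [hDx w hwx] at hzw
    exact lt_of_le_of_lt hzw hmx'.lt
  · intro hz
    obtain ⟨w, hzw, hwx'⟩ := exists_le_covBy_of_lt hz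
    rw [hDx' w hwx'] at hzw
    exact lt_of_le_of_lt hzw hmx.lt
  · intro hz
    obtain ⟨w, hxw, hwz⟩ := exists_covBy_le_of_lt hz
    rw [hUx w hxw] at hwz
    exact lt_of_lt_of_le hx'u.lt hwz
  · intro hz
    obtain ⟨w, hx'w, hwz⟩ := exists_covBy_le_of_lt hz
    rw [hUx' w hx'w] at hwz
    exact lt_of_lt_of_le hxu.lt hwz
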